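/- Let (Z, d) be a metric space with 0 < diam Z < 1 which is doubling with constant C_d, let α, τ > 1, and let (A_n)_{n≥0} be a hyperbolic-filling vertex system on Z. Then there exists a constant K = K(α, τ, C_d) ≥ 1 such that for every n ≥ 0 and every x ∈ A_n, the number of vertices (y, m) (with y ∈ A_m, m ≥ 0) distinct from (x, n) satisfying |n − m| ≤ 1 and B(x, τ^{1−|n−m|} α^{−n}) ∩ B(y, τ^{1−|n−m|} α^{−m}) ≠ ∅ is at least 1 and at most K. -/

import Mathlib

open Metric

/-- Bound on the ncard of a finite bUnion. -/
lemma aux_biUnion_ncard {γ β : Type*} (c : ℕ) (F : Finset β) (g : β → Set γ)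
    (hf : ∀ y ∈ F, (g y).Finite) (hc : ∀ y ∈ F, (g y).ncard ≤ c) :
    (⋃ y ∈ F, g y).Finite ∧ (⋃ y ∈ F, g y).ncard ≤ F.card * c := by
  classical
  induction F using Finset.induction with
  | empty => simp
  | insert _ _ hx ih =>
    rename_i a F
    have h1 := ih (fun y hy => hf y (Finset.mem_insert_of_mem hy))
      (fun y hy => hc y (Finset.mem_insert_of_mem hy))
    rw [Finset.set_biUnion_insert]
    constructor
    · exact (hf a (Finset.mem_insert_self a F)).union h1.1
    · calc (g a ∪ ⋃ y ∈ F, g y).ncard ≤ (g a).ncard + (⋃ y ∈ F, g y).ncard :=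
            Set.ncard_union_le _ _
        _ ≤ c + F.card * c := add_le_add (hc a (Finset.mem_insert_self a F)) h1.2
        _ ≤ (insert a F).card * c := by
            rw [Finset.card_insert_of_notMem hx]; ring_nf; omega

/-- In a doubling space, an `r`-separated set inside a ball of radius `2^k * (r/2)` has
at most `C_d ^ k` points. -/
lemma aux_sep_count {Z : Type} [MetricSpace Z] (C_d : ℕ)
    (hdbl : ∀ (z : Z) (r : ℝ), 0 < r → ∃ F : Finset Z,
      (Metric.ball z r ⊆ ⋃ y ∈ F, Metric.ball y (r / 2)) ∧ F.card ≤ C_d)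
    (r : ℝ) (hr : 0 < r) :
    ∀ (k : ℕ) (x : Z) (S : Set Z),
      (∀ a ∈ S, ∀ b ∈ S, a ≠ b → r ≤ dist a b) →
      S ⊆ Metric.ball x (2 ^ k * (r / 2)) →
      S.Finite ∧ S.ncard ≤ C_d ^ k := by
  intro k
  induction k with
  | zero =>
    intro x S hsep hsub
    have hsing : S.Subsingleton := by
      intro a ha b hb
      by_contra hab
      have h1 := hsub ha
      have h2 := hsub hb
      rw [mem_ball] at h1 h2
      have : dist a b < r := by
        calc dist a b ≤ dist a x + dist x b := dist_triangle _ _ _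
          _ = dist a x + dist b x := by rw [dist_comm x b]
          _ < 2^0 * (r/2) + 2^0 * (r/2) := by linarith
          _ = r := by ring
      exact absurd (hsep a ha b hb hab) (not_le.mpr this)
    refine ⟨hsing.finite, ?_⟩
    simpa using (Set.ncard_le_one_iff hsing.finite).mpr (fun ha hb => hsing ha hb)
  | succ k ih =>
    intro x S hsep hsub
    obtain ⟨F, hF, hFcard⟩ := hdbl x (2 ^ (k+1) * (r / 2)) (by positivity)
    have hhalf : (2 ^ (k+1) * (r / 2)) / 2 = 2 ^ k * (r / 2) := by ring
    have hsub' : S ⊆ ⋃ y ∈ F, S ∩ Metric.ball y (2 ^ k * (r / 2)) := by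
      intro a ha
      have := hF (hsub ha)
      rw [Set.mem_iUnion₂] at this ⊢
      obtain ⟨y, hy, hmem⟩ := this
      exact ⟨y, hy, ha, hhalf ▸ hmem⟩
    have hpiece : ∀ y ∈ F, (S ∩ Metric.ball y (2 ^ k * (r/2))).Finite ∧
        (S ∩ Metric.ball y (2 ^ k * (r/2))).ncard ≤ C_d ^ k := fun y _ =>
      ih y _ (fun a ha b hb hab => hsep a ha.1 b hb.1 hab) Set.inter_subset_right
    obtain ⟨hFin, hCard⟩ := aux_biUnion_ncard (C_d ^ k) F _
      (fun y hy => (hpiece y hy).1) (fun y hy => (hpiece y hy).2)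
    refine ⟨hFin.subset hsub', ?_⟩
    calc S.ncard ≤ (⋃ y ∈ F, S ∩ Metric.ball y (2 ^ k * (r/2))).ncard :=
          Set.ncard_le_ncard hsub' hFin
      _ ≤ F.card * C_d ^ k := hCard
      _ ≤ C_d * C_d ^ k := Nat.mul_le_mul_right _ hFcard
      _ = C_d ^ (k+1) := by ring


/-- uniformly bounded degree of the hyperbolic filling of a doubling
metric space (Proposition 2.1 of the paper). The bound `K` depends only on `α`, `τ`
and the doubling constant `C_d`. -/
theorem stmt_1 (α τ : ℝ) (hα : 1 < α) (hτ : 1 < τ) (C_d : ℕ) (hC_d : 1 ≤ C_d) :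
    ∃ K : ℕ, 1 ≤ K ∧
      ∀ (Z : Type) [MetricSpace Z] (z₀ : Z) (A : ℕ → Set Z),
        0 < Metric.diam (Set.univ : Set Z) →
        Metric.diam (Set.univ : Set Z) < 1 →
        -- Z is doubling with constant C_d
        (∀ (z : Z) (r : ℝ), 0 < r → ∃ F : Finset Z,
            (Metric.ball z r ⊆ ⋃ y ∈ F, Metric.ball y (r / 2)) ∧ F.card ≤ C_d) →
        -- (A_n) is a hyperbolic-filling vertex system
        A 0 = {z₀} →
        (∀ n : ℕ, A n ⊆ A (n + 1)) →
        (∀ n : ℕ,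
          (∀ z ∈ A n, ∀ z' ∈ A n, z ≠ z' → α ^ (-(n : ℤ)) ≤ dist z z') ∧
          (∀ ξ : Z, ∃ z ∈ A n, dist ξ z < α ^ (-(n : ℤ)))) →
        ∀ (n : ℕ) (x : Z), x ∈ A n →
          -- the set of neighbours of the vertex (x, n)
          ({v : Z × ℕ | v.1 ∈ A v.2 ∧ v ≠ (x, n) ∧
              ((n : ℤ) - (v.2 : ℤ)).natAbs ≤ 1 ∧
              (Metric.ball x (τ ^ (1 - |(n : ℤ) - (v.2 : ℤ)|) * α ^ (-(n : ℤ))) ∩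
                Metric.ball v.1
                  (τ ^ (1 - |(n : ℤ) - (v.2 : ℤ)|) * α ^ (-(v.2 : ℤ)))).Nonempty}).Finite ∧
          1 ≤ ({v : Z × ℕ | v.1 ∈ A v.2 ∧ v ≠ (x, n) ∧
              ((n : ℤ) - (v.2 : ℤ)).natAbs ≤ 1 ∧
              (Metric.ball x (τ ^ (1 - |(n : ℤ) - (v.2 : ℤ)|) * α ^ (-(n : ℤ))) ∩
                Metric.ball v.1
                  (τ ^ (1 - |(n : ℤ) - (v.2 : ℤ)|) * α ^ (-(v.2 : ℤ)))).Nonempty}).ncard ∧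
          ({v : Z × ℕ | v.1 ∈ A v.2 ∧ v ≠ (x, n) ∧
              ((n : ℤ) - (v.2 : ℤ)).natAbs ≤ 1 ∧
              (Metric.ball x (τ ^ (1 - |(n : ℤ) - (v.2 : ℤ)|) * α ^ (-(n : ℤ))) ∩
                Metric.ball v.1
                  (τ ^ (1 - |(n : ℤ) - (v.2 : ℤ)|) * α ^ (-(v.2 : ℤ)))).Nonempty}).ncard ≤ K := by
  classical
  have hα0 : (0:ℝ) < α := lt_trans one_pos hα
  have hτ0 : (0:ℝ) < τ := lt_trans one_pos hτ
  obtain ⟨k, hk⟩ := pow_unbounded_of_one_lt (4 * τ * (α * α)) (one_lt_two (α := ℝ))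
  refine ⟨3 * C_d ^ k, by have h := Nat.one_le_pow k C_d hC_d; omega, ?_⟩
  intro Z _ z₀ A _ _ hdbl _ _ hfill n x hx
  set N := {v : Z × ℕ | v.1 ∈ A v.2 ∧ v ≠ (x, n) ∧
      ((n : ℤ) - (v.2 : ℤ)).natAbs ≤ 1 ∧
      (Metric.ball x (τ ^ (1 - |(n : ℤ) - (v.2 : ℤ)|) * α ^ (-(n : ℤ))) ∩
        Metric.ball v.1
          (τ ^ (1 - |(n : ℤ) - (v.2 : ℤ)|) * α ^ (-(v.2 : ℤ)))).Nonempty} with hN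
  set r : ℝ := α ^ (-(n+1 : ℤ)) with hrdef
  have hr : 0 < r := zpow_pos hα0 _
  -- the three levels
  set F : Finset ℕ := {n-1, n, n+1} with hF
  have hFcard : F.card ≤ 3 := by
    calc F.card ≤ ({n, n+1} : Finset ℕ).card + 1 := Finset.card_insert_le _ _
      _ ≤ (({n+1} : Finset ℕ).card + 1) + 1 := by
          exact Nat.add_le_add_right (Finset.card_insert_le _ _) 1
      _ = 3 := by simp
  -- slices
  set g : ℕ → Set (Z × ℕ) := fun m => (fun y => (y, m)) '' (A m ∩ ball x (2 ^ k * (r/2)))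
    with hg
  -- each slice is small
  have hslice : ∀ m ∈ F, (g m).Finite ∧ (g m).ncard ≤ C_d ^ k := by
    intro m hm
    have hmn : m ≤ n + 1 := by
      simp only [hF, Finset.mem_insert, Finset.mem_singleton] at hm
      omega
    have hsep : ∀ a ∈ A m ∩ ball x (2 ^ k * (r/2)), ∀ b ∈ A m ∩ ball x (2 ^ k * (r/2)),
        a ≠ b → r ≤ dist a b := by
      intro a ha b hb hab
      refine le_trans ?_ ((hfill m).1 a ha.1 b hb.1 hab)
      exact zpow_le_zpow_right₀ hα.le (by omega)
    obtain ⟨h1, h2⟩ := aux_sep_count C_d hdbl r hr k x _ hsep Set.inter_subset_right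
    refine ⟨h1.image _, le_trans (Set.ncard_image_le h1) h2⟩
  -- N is contained in the union of the slices
  have hNsub : N ⊆ ⋃ m ∈ F, g m := by
    rintro ⟨y, m⟩ ⟨hv1, hv2, hv3, z, hz1, hz2⟩
    simp only at hv1 hv3 hz1 hz2
    have hm3 : m ∈ F := by
      simp only [hF, Finset.mem_insert, Finset.mem_singleton]
      omega
    rw [Set.mem_iUnion₂]
    refine ⟨m, hm3, y, ⟨hv1, ?_⟩, rfl⟩
    rw [mem_ball] at hz1 hz2 ⊢
    rw [dist_comm]
    -- bound the radius
    have he : (1 - |(n : ℤ) - (m : ℤ)|) ≤ 1 := by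
      have := abs_nonneg ((n : ℤ) - (m : ℤ)); omega
    have hτe : τ ^ (1 - |(n : ℤ) - (m : ℤ)|) ≤ τ := by
      calc τ ^ (1 - |(n : ℤ) - (m : ℤ)|) ≤ τ ^ (1:ℤ) := zpow_le_zpow_right₀ hτ.le he
        _ = τ := zpow_one τ
    have hτe0 : 0 < τ ^ (1 - |(n : ℤ) - (m : ℤ)|) := zpow_pos hτ0 _
    have hαm : α ^ (-(m:ℤ)) ≤ α ^ (1-(n:ℤ)) := zpow_le_zpow_right₀ hα.le (by omega)
    have hαn : α ^ (-(n:ℤ)) ≤ α ^ (1-(n:ℤ)) := zpow_le_zpow_right₀ hα.le (by omega)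
    have hα1n : 0 < α ^ (1-(n:ℤ)) := zpow_pos hα0 _
    have hb1 : τ ^ (1 - |(n : ℤ) - (m : ℤ)|) * α ^ (-(n:ℤ)) ≤ τ * α ^ (1-(n:ℤ)) :=
      mul_le_mul hτe hαn (zpow_pos hα0 _).le hτ0.le
    have hb2 : τ ^ (1 - |(n : ℤ) - (m : ℤ)|) * α ^ (-(m:ℤ)) ≤ τ * α ^ (1-(n:ℤ)) :=
      mul_le_mul hτe hαm (zpow_pos hα0 _).le hτ0.le
    have hdxy : dist x y ≤ dist z x + dist z y := by
      rw [dist_comm z x]; exact dist_triangle _ _ _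
    have hsplit : α ^ (1-(n:ℤ)) = α * α * r := by
      rw [hrdef, show (1 - (n:ℤ)) = 2 + (-((n:ℤ)+1)) by ring,
        zpow_add₀ (ne_of_gt hα0), zpow_two]
    have hfinal : 2 * (τ * α ^ (1-(n:ℤ))) ≤ 2 ^ k * (r / 2) := by
      rw [hsplit]
      have h4 : 4 * τ * (α * α) ≤ 2 ^ k := hk.le
      have := mul_le_mul_of_nonneg_right h4 hr.le
      nlinarith [hr.le]
    calc dist x y ≤ dist z x + dist z y := hdxy
      _ < τ ^ (1 - |(n : ℤ) - (m : ℤ)|) * α ^ (-(n:ℤ)) +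
          τ ^ (1 - |(n : ℤ) - (m : ℤ)|) * α ^ (-(m:ℤ)) := add_lt_add hz1 hz2
      _ ≤ τ * α ^ (1-(n:ℤ)) + τ * α ^ (1-(n:ℤ)) := add_le_add hb1 hb2
      _ = 2 * (τ * α ^ (1-(n:ℤ))) := by ring
      _ ≤ 2 ^ k * (r / 2) := hfinal
  obtain ⟨hUfin, hUcard⟩ := aux_biUnion_ncard (C_d ^ k) F g
    (fun m hm => (hslice m hm).1) (fun m hm => (hslice m hm).2)
  have hNfin : N.Finite := hUfin.subset hNsub
  -- lower bound: a neighbour at level n+1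
  obtain ⟨y, hy, hdy⟩ := (hfill (n+1)).2 x
  have habs : |(n : ℤ) - ((n+1 : ℕ) : ℤ)| = 1 := by
    rw [show (n : ℤ) - ((n+1 : ℕ) : ℤ) = -1 by push_cast; ring]
    norm_num
  have hmemN : (y, n+1) ∈ N := by
    refine ⟨hy, by simp, ?_, ⟨x, ?_, ?_⟩⟩
    · simp only; omega
    · rw [mem_ball, habs]
      simp only [dist_self, sub_self, zpow_zero, one_mul]
      exact zpow_pos hα0 _
    · rw [mem_ball, habs]
      simp only [sub_self, zpow_zero, one_mul]
      exact hdy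
  refine ⟨hNfin, ?_, ?_⟩
  · exact (Set.ncard_pos hNfin).mpr ⟨_, hmemN⟩
  · calc N.ncard ≤ (⋃ m ∈ F, g m).ncard := Set.ncard_le_ncard hNsub hUfin
      _ ≤ F.card * C_d ^ k := hUcard
      _ ≤ 3 * C_d ^ k := Nat.mul_le_mul_right _ hFcard
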